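/- Let V be a finite-dimensional complex inner product space, let F be a linear operator on V, and let r > 0 be such that Re ⟪φ, F φ⟫ ≥ r ‖φ‖² for every φ ∈ V. Then F is invertible, the Bochner integral ∫₀^∞ exp(−t·F) dt converges, and ∫₀^∞ exp(−t·F) dt = F^{-1}. -/

import Mathlib

open MeasureTheory

section helpers
open NormedSpace Complex

lemma expD {V : Type*} [NormedAddCommGroup V] [InnerProductSpace ℂ V]
    [FiniteDimensional ℂ V] (F : V →L[ℂ] V) (t : ℝ) :
    HasDerivAt (fun s : ℝ => exp ((-(s : ℂ)) • F))
      (-(F * exp ((-(t : ℂ)) • F))) t := by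
  have h := (hasDerivAt_exp_smul_const' (𝕂 := ℂ) (-F) (t : ℂ)).scomp t
      Complex.ofRealCLM.hasDerivAt
  simp only [Function.comp_def, ofRealCLM_apply, ofReal_one, one_smul, neg_smul, smul_neg,
    ← neg_smul, neg_mul, neg_inj] at h
  simpa [neg_smul, smul_neg, neg_mul] using h

lemma normBound {V : Type*} [NormedAddCommGroup V] [InnerProductSpace ℂ V]
    [FiniteDimensional ℂ V] (F : V →L[ℂ] V) (r : ℝ) (hr : 0 < r)
    (hF : ∀ φ : V, r * ‖φ‖ ^ 2 ≤ ((inner ℂ φ (F φ) : ℂ)).re)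
    (t : ℝ) (ht : 0 ≤ t) : ‖exp ((-(t : ℂ)) • F)‖ ≤ Real.exp (-(r * t)) := by
  apply ContinuousLinearMap.opNorm_le_bound _ (Real.exp_nonneg _)
  intro φ
  set f : ℝ → V := fun s => exp ((-(s : ℂ)) • F) φ with hf
  have hfd : ∀ s : ℝ, HasDerivAt f (-(F (f s))) s := by
    intro s
    have hL := (((ContinuousLinearMap.apply ℂ V φ).restrictScalars
      ℝ).hasFDerivAt.comp_hasDerivAt s (expD F s))
    simpa [Function.comp_def, hf, neg_smul] using hL
  set g : ℝ → ℝ := fun s => Real.exp (2 * r * s) * ((inner ℂ (f s) (f s) : ℂ)).re with hg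
  have hgd : ∀ s : ℝ, HasDerivAt g
      (2 * r * Real.exp (2 * r * s) * ((inner ℂ (f s) (f s) : ℂ)).re
        + Real.exp (2 * r * s) *
          ((inner ℂ (f s) (-(F (f s))) : ℂ) + (inner ℂ (-(F (f s))) (f s) : ℂ)).re) s := by
    intro s
    have h0 : HasDerivAt (fun u : ℝ => 2 * r * u) (2 * r) s := by
      simpa using (hasDerivAt_id s).const_mul (2 * r)
    have h1 : HasDerivAt (fun u : ℝ => Real.exp (2 * r * u))
        (2 * r * Real.exp (2 * r * s)) s := by
      simpa [Function.comp_def, mul_comm] using (Real.hasDerivAt_exp (2 * r * s)).comp s h0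
    have h2 : HasDerivAt (fun u : ℝ => ((inner ℂ (f u) (f u) : ℂ)).re)
        (((inner ℂ (f s) (-(F (f s))) : ℂ) + (inner ℂ (-(F (f s))) (f s) : ℂ)).re) s := by
      have hi := HasDerivAt.inner ℂ (hfd s) (hfd s)
      exact Complex.reCLM.hasFDerivAt.comp_hasDerivAt s hi
    exact h1.mul h2
  have hsq : ∀ ψ : V, ((inner ℂ ψ ψ : ℂ)).re = ‖ψ‖ ^ 2 := by
    intro ψ
    rw [← RCLike.re_to_complex]
    exact inner_self_eq_norm_sq ψ
  have hD : ∀ s : ℝ, deriv g s ≤ 0 := by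
    intro s
    rw [(hgd s).deriv]
    have hz : (inner ℂ (-(F (f s))) (f s) : ℂ)
        = (starRingEnd ℂ) (inner ℂ (f s) (-(F (f s)))) := (inner_conj_symm _ _).symm
    have e2 : ((inner ℂ (f s) (-(F (f s))) : ℂ) + (inner ℂ (-(F (f s))) (f s) : ℂ)).re
        = -(2 * ((inner ℂ (f s) (F (f s)) : ℂ)).re) := by
      rw [hz, Complex.add_conj]
      simp [inner_neg_right]
    have h3 := hF (f s)
    have h4 : (0:ℝ) < Real.exp (2 * r * s) := Real.exp_pos _
    rw [hsq, e2]
    nlinarith [sq_nonneg (‖f s‖)]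
  have hanti : Antitone g := antitone_of_deriv_nonpos
    (fun s => (hgd s).differentiableAt) hD
  have hg0 : g t ≤ g 0 := hanti ht
  have e0 : g 0 = ‖φ‖ ^ 2 := by
    simp only [hg]
    norm_num [hf, hsq]
    rw [← Complex.ofReal_pow, Complex.ofReal_re]
  have egt : g t = Real.exp (2 * r * t) * ‖f t‖ ^ 2 := by
    simp only [hg]; rw [hsq]
  rw [egt, e0] at hg0
  have hb : ‖f t‖ ^ 2 ≤ (Real.exp (-(r * t)) * ‖φ‖) ^ 2 := by
    have e : Real.exp (-(r*t)) * Real.exp (-(r*t)) * Real.exp (2*r*t) = 1 := by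
      rw [← Real.exp_add, ← Real.exp_add, show -(r*t) + -(r*t) + 2*r*t = 0 by ring,
        Real.exp_zero]
    nlinarith [Real.exp_pos (2*r*t), Real.exp_pos (-(r*t)), sq_nonneg (‖f t‖), norm_nonneg φ,
      mul_le_mul_of_nonneg_left hg0 (mul_nonneg (Real.exp_nonneg (-(r*t))) (Real.exp_nonneg (-(r*t))))]
  have : ‖f t‖ ≤ Real.exp (-(r * t)) * ‖φ‖ := by
    have h1 : (0:ℝ) ≤ Real.exp (-(r*t)) * ‖φ‖ := by positivity
    nlinarith [norm_nonneg (f t)]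
  exact this

end helpers

section main
open NormedSpace Complex

/-- For a strictly accretive operator `F` on a finite-dimensional complex inner
product space, `F` is invertible, `∫₀^∞ exp(−tF) dt` converges, and it equals `F⁻¹`. -/
theorem stmt_5 {V : Type*} [NormedAddCommGroup V] [InnerProductSpace ℂ V]
    [FiniteDimensional ℂ V]
    (F : V →L[ℂ] V) (r : ℝ) (hr : 0 < r)
    (hF : ∀ φ : V, r * ‖φ‖ ^ 2 ≤ ((inner ℂ φ (F φ) : ℂ)).re) :
    IsUnit F ∧
    IntegrableOn (fun t : ℝ => NormedSpace.exp ((-(t : ℂ)) • F)) (Set.Ioi 0) ∧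
    ∫ t in Set.Ioi (0 : ℝ), NormedSpace.exp ((-(t : ℂ)) • F) = Ring.inverse F := by
  have hcont : Continuous (fun t : ℝ => exp ((-(t : ℂ)) • F)) :=
    (show Continuous (NormedSpace.exp : (V →L[ℂ] V) → (V →L[ℂ] V)) by letI : NormedAlgebra ℚ (V →L[ℂ] V) := NormedAlgebra.restrictScalars ℚ ℂ _; exact exp_continuous).comp ((Complex.continuous_ofReal.neg).smul continuous_const)
  have hint : IntegrableOn (fun t : ℝ => exp ((-(t : ℂ)) • F)) (Set.Ioi 0) := by
    apply Integrable.mono' (g := fun t => Real.exp (-r * t)) (exp_neg_integrableOn_Ioi 0 hr)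
      hcont.aestronglyMeasurable
    filter_upwards [ae_restrict_mem measurableSet_Ioi] with t ht
    have h := normBound F r hr hF t ht.le
    show ‖exp ((-(t : ℂ)) • F)‖ ≤ Real.exp (-r * t)
    rw [show -r * t = -(r * t) by ring]
    exact h
  have hinj : Function.Injective F := by
    intro a b hab
    have h0 : F (a - b) = 0 := by rw [map_sub, hab, sub_self]
    have h1 := hF (a - b)
    rw [h0, inner_zero_right] at h1
    simp only [Complex.zero_re] at h1
    have h2 : ‖a - b‖ = 0 := by
      by_contra hne
      have hlt : 0 < ‖a - b‖ := lt_of_le_of_ne (norm_nonneg _) (Ne.symm hne)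
      nlinarith [mul_pos hr (mul_pos hlt hlt)]
    rw [norm_eq_zero, sub_eq_zero] at h2
    exact h2
  have hsurj : Function.Surjective F :=
    (LinearMap.injective_iff_surjective (f := (F : V →ₗ[ℂ] V))).mp hinj
  have hker : LinearMap.ker (F : V →ₗ[ℂ] V) = ⊥ := LinearMap.ker_eq_bot.mpr hinj
  have hrange : LinearMap.range (F : V →ₗ[ℂ] V) = ⊤ := LinearMap.range_eq_top.mpr hsurj
  let e : V ≃L[ℂ] V := ContinuousLinearEquiv.ofBijective F hker hrange
  have hunit : IsUnit F := by
    refine ⟨⟨F, e.symm.toContinuousLinearMap, ?_, ?_⟩, rfl⟩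
    · ext x
      simp [ContinuousLinearMap.mul_apply, e]
    · ext x
      simp [ContinuousLinearMap.mul_apply, e]
  have hderivNeg : ∀ x ∈ Set.Ici (0 : ℝ),
      HasDerivAt (fun s : ℝ => -(exp ((-(s : ℂ)) • F))) (F * exp ((-(x : ℂ)) • F)) x :=
    fun x _ => by simpa using (expD F x).fun_neg
  have htend : Filter.Tendsto (fun s : ℝ => -(exp ((-(s : ℂ)) • F)))
      Filter.atTop (nhds 0) := by
    rw [← neg_zero]
    apply Filter.Tendsto.neg
    apply squeeze_zero_norm' (a := fun t : ℝ => Real.exp (-(r * t)))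
    · filter_upwards [Filter.eventually_ge_atTop (0 : ℝ)] with t ht
      exact normBound F r hr hF t ht
    · have h5 : Filter.Tendsto (fun t : ℝ => r * t) Filter.atTop Filter.atTop :=
        Filter.Tendsto.const_mul_atTop hr Filter.tendsto_id
      exact Real.tendsto_exp_atBot.comp (Filter.tendsto_neg_atTop_atBot.comp h5)
  have hFint : IntegrableOn (fun s : ℝ => F * exp ((-(s : ℂ)) • F)) (Set.Ioi 0) :=
    (ContinuousLinearMap.mul ℂ (V →L[ℂ] V) F).integrable_comp hint
  have hFTC := integral_Ioi_of_hasDerivAt_of_tendsto' hderivNeg hFint htend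
  have h1 : ∫ s in Set.Ioi (0 : ℝ), F * exp ((-(s : ℂ)) • F) = 1 := by
    rw [hFTC]
    simp
  have hmul : F * (∫ t in Set.Ioi (0 : ℝ), exp ((-(t : ℂ)) • F)) = 1 := by
    rw [← h1]
    exact ((ContinuousLinearMap.mul ℂ (V →L[ℂ] V) F).integral_comp_comm hint).symm
  refine ⟨hunit, hint, ?_⟩
  have key : Ring.inverse F * (F * (∫ t in Set.Ioi (0 : ℝ), exp ((-(t : ℂ)) • F)))
      = ∫ t in Set.Ioi (0 : ℝ), exp ((-(t : ℂ)) • F) := by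
    rw [← mul_assoc, Ring.inverse_mul_cancel _ hunit, one_mul]
  rw [← key, hmul, mul_one]

end main
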